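/- Let X be a random vector in [0,∞)^d with distribution function F(t) = P(X ≤ t) (componentwise), fix m = (m_1,…,m_d) with each m_j a positive integer and x ∈ [0,∞)^d, and define Z := Σ_{k∈ℕ_0^d} (1{X ≤ k/m} − F(k/m))·P_{k,m}(x), where k/m = (k_1/m_1,…,k_d/m_d). Let K = (K_1,…,K_d) and L = (L_1,…,L_d) be such that K_1,…,K_d,L_1,…,L_d are mutually independent, independent of X, with K_j and L_j Poisson distributed with mean m_j x_j. Then E[Z²] = E[F((K∧L)/m)] − (E[F(K/m)])², where (K∧L)_j = min(K_j, L_j) and division is componentwise. -/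

import Mathlib

open MeasureTheory ProbabilityTheory Filter Real

/-- Partial derivative `∂_{x_j} F(x)`. -/
noncomputable def pd {d : ℕ} (F : (Fin d → ℝ) → ℝ) (j : Fin d) (x : Fin d → ℝ) : ℝ :=
  deriv (fun t => F (Function.update x j t)) (x j)

/-- Second partial derivative `∂²_{x_i x_j} F(x)`. -/
noncomputable def pd2 {d : ℕ} (F : (Fin d → ℝ) → ℝ) (i j : Fin d) (x : Fin d → ℝ) : ℝ :=
  pd (pd F j) i x

/-- Product-Poisson weights `P_{k,m}(x) = ∏_j e^{-m_j x_j} (m_j x_j)^{k_j} / k_j!`. -/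
noncomputable def poissonWeight {d : ℕ} (m : Fin d → ℕ) (k : Fin d → ℕ) (x : Fin d → ℝ) : ℝ :=
  ∏ j, Real.exp (-(m j * x j)) * (m j * x j) ^ (k j) / Nat.factorial (k j)

/-- Szász–Mirakyan smoothing `F_m(x) = Σ_k F(k/m) P_{k,m}(x)`. -/
noncomputable def szasz {d : ℕ} (F : (Fin d → ℝ) → ℝ) (m : Fin d → ℕ) (x : Fin d → ℝ) : ℝ :=
  ∑' k : Fin d → ℕ, F (fun j => (k j : ℝ) / (m j : ℝ)) * poissonWeight m k x

/-- The open positive orthant `(0,∞)^d`. -/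
def posOrthant (d : ℕ) : Set (Fin d → ℝ) := {x | ∀ j, 0 < x j}

/-- ℓ¹-neighbourhood of `S` inside the positive orthant. -/
def l1Nbhd {d : ℕ} (S : Set (Fin d → ℝ)) (δ : ℝ) : Set (Fin d → ℝ) :=
  {y | (∀ j, 0 < y j) ∧ ∃ z ∈ S, ∑ j, |y j - z j| ≤ δ}

/-- Assumption (A1): `F` is C² on `(0,∞)^d`, with first and second partial derivatives
bounded on an ℓ¹-neighbourhood of each compact `S ⊂ (0,∞)^d`. -/
def A1 {d : ℕ} (F : (Fin d → ℝ) → ℝ) : Prop :=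
  ContDiffOn ℝ 2 F (posOrthant d) ∧
  ∀ S : Set (Fin d → ℝ), IsCompact S → S ⊆ posOrthant d →
    ∃ δ > 0, ∃ M : ℝ, ∀ y ∈ l1Nbhd S δ,
      (∀ i, |pd F i y| ≤ M) ∧ (∀ i j, |pd2 F i j y| ≤ M)

/-- `m_min = min_j m_j`. -/
noncomputable def mmin {d : ℕ} (m : Fin d → ℕ) : ℕ := ⨅ j, m j

set_option maxHeartbeats 1000000 in
lemma hasSum_pi_prod : ∀ {d : ℕ} (w : Fin d → ℕ → ℝ) (s : Fin d → ℝ),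
    (∀ j n, 0 ≤ w j n) → (∀ j, HasSum (w j) (s j)) →
    HasSum (fun k : Fin d → ℕ => ∏ j, w j (k j)) (∏ j, s j) := by
  intro d
  induction d with
  | zero =>
    intro w s _ h
    have : (fun k : Fin 0 → ℕ => ∏ j, w j (k j)) = fun _ => (1:ℝ) := by
      funext k; simp
    rw [this]
    simpa using hasSum_single (f := fun _ : Fin 0 → ℕ => (1:ℝ)) (default : Fin 0 → ℕ)
      (fun b hb => absurd (Subsingleton.elim b default) hb)
  | succ d ih =>
    intro w s hw h
    have h0 := h 0
    have htail : HasSum (fun k : Fin d → ℕ => ∏ j : Fin d, w j.succ (k j))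
        (∏ j : Fin d, s j.succ) := ih (fun j : Fin d => w j.succ) (fun j : Fin d => s j.succ)
      (fun j n => hw j.succ n) (fun j => h j.succ)
    have hn1 : Summable fun n : ℕ => ‖w 0 n‖ := by
      simpa only [Real.norm_of_nonneg (hw 0 _)] using h0.summable
    have hn2 : Summable fun k : Fin d → ℕ => ‖∏ j : Fin d, w j.succ (k j)‖ := by
      have : ∀ k : Fin d → ℕ, ‖∏ j : Fin d, w j.succ (k j)‖ = ∏ j : Fin d, w j.succ (k j) :=
        fun k => Real.norm_of_nonneg (Finset.prod_nonneg fun j _ => hw j.succ _)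
      simpa only [this] using htail.summable
    have hsummul : Summable (fun q : ℕ × (Fin d → ℕ) =>
        w 0 q.1 * ∏ j : Fin d, w j.succ (q.2 j)) := summable_mul_of_summable_norm (f := fun n => w 0 n)
      (g := fun k : Fin d → ℕ => ∏ j : Fin d, w j.succ (k j)) hn1 hn2
    have hmul : HasSum (fun q : ℕ × (Fin d → ℕ) => w 0 q.1 * ∏ j : Fin d, w j.succ (q.2 j))
        (s 0 * ∏ j : Fin d, s j.succ) := HasSum.mul (f := fun n => w 0 n)
      (g := fun k : Fin d → ℕ => ∏ j : Fin d, w j.succ (k j)) h0 htail hsummul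
    have key := ((Fin.consEquiv (fun _ : Fin (d+1) => ℕ)).symm.hasSum_iff
      (f := fun q : ℕ × (Fin d → ℕ) => w 0 q.1 * ∏ j : Fin d, w j.succ (q.2 j))
      (a := s 0 * ∏ j : Fin d, s j.succ)).mpr hmul
    have heq : ((fun q : ℕ × (Fin d → ℕ) => w 0 q.1 * ∏ j : Fin d, w j.succ (q.2 j)) ∘
        (Fin.consEquiv (fun _ : Fin (d+1) => ℕ)).symm) = fun k : Fin (d+1) → ℕ => ∏ j, w j (k j) := by
      funext k
      simp [Fin.prod_univ_succ, Fin.tail]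
    rw [heq] at key
    simpa [Fin.prod_univ_succ] using key

lemma pw_nonneg {d : ℕ} (m k : Fin d → ℕ) (x : Fin d → ℝ) (hx : ∀ j, 0 ≤ x j) :
    0 ≤ poissonWeight m k x :=
  Finset.prod_nonneg fun j _ => div_nonneg (mul_nonneg (Real.exp_pos _).le
    (pow_nonneg (mul_nonneg (Nat.cast_nonneg _) (hx j)) _)) (Nat.cast_nonneg _)

lemma pw_hasSum {d : ℕ} (m : Fin d → ℕ) (x : Fin d → ℝ) (hx : ∀ j, 0 ≤ x j) :
    HasSum (fun k : Fin d → ℕ => poissonWeight m k x) 1 := by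
  have h : ∀ j : Fin d, HasSum
      (fun n => Real.exp (-(m j * x j)) * (m j * x j) ^ n / Nat.factorial n) 1 := by
    intro j
    have hc : (Real.toNNReal ((m j : ℝ) * x j) : ℝ) = (m j : ℝ) * x j :=
      Real.coe_toNNReal _ (mul_nonneg (Nat.cast_nonneg _) (hx j))
    simpa only [poissonPMFReal, hc] using poissonPMFRealSum (Real.toNNReal ((m j : ℝ) * x j))
  have hnn : ∀ (j : Fin d) (n : ℕ),
      0 ≤ Real.exp (-(m j * x j)) * (m j * x j) ^ n / Nat.factorial n := fun j n =>
    div_nonneg (mul_nonneg (Real.exp_pos _).le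
      (pow_nonneg (mul_nonneg (Nat.cast_nonneg _) (hx j)) _)) (Nat.cast_nonneg _)
  simpa [poissonWeight] using hasSum_pi_prod _ (fun _ => (1:ℝ)) hnn h

set_option maxHeartbeats 1000000 in
lemma int_indicator_aux {Ω : Type*} [MeasurableSpace Ω] (μ : Measure Ω) [IsProbabilityMeasure μ]
    (A B : Set Ω) (hA : MeasurableSet A) (hB : MeasurableSet B) (u v : ℝ) :
    ∫ ω, (A.indicator 1 ω - u) * (B.indicator 1 ω - v) ∂μ
      = (μ (A ∩ B)).toReal - u * (μ B).toReal - v * (μ A).toReal + u * v := by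
  have hiA : Integrable (fun ω => A.indicator (fun _ => (1:ℝ)) ω) μ :=
    (integrable_const (1:ℝ)).indicator hA
  have hiB : Integrable (fun ω => B.indicator (fun _ => (1:ℝ)) ω) μ :=
    (integrable_const (1:ℝ)).indicator hB
  have hiAB : Integrable (fun ω => (A ∩ B).indicator (fun _ => (1:ℝ)) ω) μ :=
    (integrable_const (1:ℝ)).indicator (hA.inter hB)
  have h2 : Integrable (fun ω => (A ∩ B).indicator (fun _ => (1:ℝ)) ω
      - u * B.indicator (fun _ => (1:ℝ)) ω) μ := hiAB.sub (hiB.const_mul u)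
  have h1 : Integrable (fun ω => (A ∩ B).indicator (fun _ => (1:ℝ)) ω
      - u * B.indicator (fun _ => (1:ℝ)) ω - v * A.indicator (fun _ => (1:ℝ)) ω) μ :=
    h2.sub (hiA.const_mul v)
  have hpt : ∀ ω, (A.indicator 1 ω - u) * (B.indicator 1 ω - v)
      = (A ∩ B).indicator (fun _ => (1:ℝ)) ω - u * B.indicator (fun _ => (1:ℝ)) ω
        - v * A.indicator (fun _ => (1:ℝ)) ω + u * v := by
    intro ω
    by_cases h1 : ω ∈ A <;> by_cases h2 : ω ∈ B <;>
      simp [Set.indicator_apply, h1, h2] <;> ring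
  calc ∫ ω, (A.indicator 1 ω - u) * (B.indicator 1 ω - v) ∂μ
      = ∫ ω, ((A ∩ B).indicator (fun _ => (1:ℝ)) ω - u * B.indicator (fun _ => (1:ℝ)) ω
          - v * A.indicator (fun _ => (1:ℝ)) ω + u * v) ∂μ := by
        simp only [hpt]
    _ = (μ (A ∩ B)).toReal - u * (μ B).toReal - v * (μ A).toReal + u * v := by
        rw [integral_add h1 (integrable_const _), integral_sub h2 (hiA.const_mul v),
          integral_sub hiAB (hiB.const_mul u),
          integral_const_mul, integral_const_mul, integral_const,
          show (fun _ : Ω => (1:ℝ)) = (1 : Ω → ℝ) from rfl,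
          integral_indicator_one (hA.inter hB), integral_indicator_one hA,
          integral_indicator_one hB]
        simp only [measureReal_def, measure_univ, ENNReal.toReal_one, one_smul]

set_option maxHeartbeats 1000000 in
lemma second_moment_abstract {Ω : Type*} [MeasurableSpace Ω] (μ : Measure Ω)
    [IsProbabilityMeasure μ] {K : Type*} [Countable K]
    (S : K → Set Ω) (hS : ∀ k, MeasurableSet (S k))
    (p : K → ℝ) (hp : ∀ k, 0 ≤ p k) (hp1 : HasSum p 1) :
    ∫ ω, (∑' k, ((S k).indicator 1 ω - (μ (S k)).toReal) * p k) ^ 2 ∂μ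
      = (∑' q : K × K, (μ (S q.1 ∩ S q.2)).toReal * p q.1 * p q.2)
        - (∑' k, (μ (S k)).toReal * p k) ^ 2 := by
  have hpsum : Summable p := hp1.summable
  set u : K → ℝ := fun k => (μ (S k)).toReal with hu_def
  have hu0 : ∀ k, 0 ≤ u k := fun k => ENNReal.toReal_nonneg
  have hu1 : ∀ k, u k ≤ 1 := by
    intro k
    have := ENNReal.toReal_mono (by simp) (prob_le_one (μ := μ) (s := S k))
    simpa using this
  set g : Ω → K → ℝ := fun ω k => ((S k).indicator 1 ω - u k) * p k with hg_def
  have habs : ∀ (ω : Ω) (k : K), |(S k).indicator (1 : Ω → ℝ) ω - u k| ≤ 1 := by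
    intro ω k
    by_cases h : ω ∈ S k <;>
      · simp [Set.indicator_apply, h, abs_le]
        constructor <;> linarith [hu0 k, hu1 k]
  have hgle : ∀ (ω : Ω) (k : K), ‖g ω k‖ ≤ p k := by
    intro ω k
    rw [hg_def]
    rw [Real.norm_eq_abs, abs_mul, abs_of_nonneg (hp k)]
    calc |(S k).indicator 1 ω - u k| * p k ≤ 1 * p k :=
      mul_le_mul_of_nonneg_right (habs ω k) (hp k)
    _ = p k := one_mul _
  have hn : ∀ ω, Summable fun k => ‖g ω k‖ := fun ω =>
    Summable.of_nonneg_of_le (fun k => norm_nonneg _) (fun k => hgle ω k) hpsum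
  have hgsum : ∀ ω, Summable (g ω) := fun ω => (hn ω).of_norm
  -- measurability
  have hgmeas : ∀ k, Measurable (fun ω => g ω k) :=
    fun k => ((measurable_one.indicator (hS k)).sub measurable_const).mul_const _
  -- step 1 : pointwise square
  have step1 : ∀ ω, (∑' k, g ω k) ^ 2 = ∑' q : K × K, g ω q.1 * g ω q.2 := by
    intro ω
    rw [sq, tsum_mul_tsum_of_summable_norm (f := g ω) (g := g ω) (hn ω) (hn ω)]
  -- step 2 : swap integral and sum
  have hpp : Summable fun q : K × K => p q.1 * p q.2 :=
    hpsum.mul_of_nonneg hpsum hp hp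
  have hppnn : ∀ q : K × K, 0 ≤ p q.1 * p q.2 := fun q => mul_nonneg (hp _) (hp _)
  have hprodle : ∀ (ω : Ω) (q : K × K), ‖g ω q.1 * g ω q.2‖ ≤ p q.1 * p q.2 := by
    intro ω q
    rw [norm_mul]
    exact mul_le_mul (hgle ω q.1) (hgle ω q.2) (norm_nonneg _) (hp _)
  have step2 : ∫ ω, (∑' q : K × K, g ω q.1 * g ω q.2) ∂μ
      = ∑' q : K × K, ∫ ω, g ω q.1 * g ω q.2 ∂μ := by
    apply integral_tsum
    · exact fun q => (((hgmeas q.1).mul (hgmeas q.2)).aestronglyMeasurable)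
    · have hb : ∀ q : K × K, ∫⁻ ω, ‖g ω q.1 * g ω q.2‖₊ ∂μ ≤ ENNReal.ofReal (p q.1 * p q.2) := by
        intro q
        calc ∫⁻ ω, ‖g ω q.1 * g ω q.2‖₊ ∂μ
            ≤ ∫⁻ _, ENNReal.ofReal (p q.1 * p q.2) ∂μ := by
              apply lintegral_mono
              intro ω
              dsimp only
              rw [← ENNReal.ofReal_coe_nnreal, coe_nnnorm]
              exact ENNReal.ofReal_le_ofReal (hprodle ω q)
          _ = ENNReal.ofReal (p q.1 * p q.2) := by simp [lintegral_const, measure_univ]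
      have := ENNReal.tsum_le_tsum hb
      refine ne_top_of_le_ne_top ?_ this
      rw [← ENNReal.ofReal_tsum_of_nonneg hppnn hpp]
      exact ENNReal.ofReal_ne_top
  -- step 3 : the integral for each pair
  have step3 : ∀ q : K × K, ∫ ω, g ω q.1 * g ω q.2 ∂μ
      = ((μ (S q.1 ∩ S q.2)).toReal - u q.1 * u q.2) * (p q.1 * p q.2) := by
    intro q
    have hpt : (fun ω => g ω q.1 * g ω q.2)
        = fun ω => ((S q.1).indicator 1 ω - u q.1) * ((S q.2).indicator 1 ω - u q.2)
            * (p q.1 * p q.2) := by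
      funext ω; rw [hg_def]; ring
    rw [hpt, integral_mul_const, int_indicator_aux μ _ _ (hS q.1) (hS q.2)]
    simp only [hu_def]
    ring
  -- step 4 : sum manipulation
  have hFp : Summable fun k => u k * p k :=
    Summable.of_nonneg_of_le (fun k => mul_nonneg (hu0 k) (hp k))
      (fun k => by calc u k * p k ≤ 1 * p k := mul_le_mul_of_nonneg_right (hu1 k) (hp k)
                    _ = p k := one_mul _) hpsum
  have hFpn : Summable fun k => ‖u k * p k‖ := by
    have : ∀ k, ‖u k * p k‖ = u k * p k := fun k =>
      Real.norm_of_nonneg (mul_nonneg (hu0 k) (hp k))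
    simpa only [this] using hFp
  have hs2 : Summable fun q : K × K => (u q.1 * p q.1) * (u q.2 * p q.2) :=
    summable_mul_of_summable_norm (f := fun k => u k * p k) (g := fun k => u k * p k) hFpn hFpn
  have hs1 : Summable fun q : K × K => (μ (S q.1 ∩ S q.2)).toReal * (p q.1 * p q.2) := by
    apply Summable.of_nonneg_of_le (fun q => mul_nonneg ENNReal.toReal_nonneg (hppnn q)) _ hpp
    intro q
    have h1 : (μ (S q.1 ∩ S q.2)).toReal ≤ 1 := by
      have := ENNReal.toReal_mono (by simp) (prob_le_one (μ := μ) (s := S q.1 ∩ S q.2))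
      simpa using this
    calc (μ (S q.1 ∩ S q.2)).toReal * (p q.1 * p q.2) ≤ 1 * (p q.1 * p q.2) :=
        mul_le_mul_of_nonneg_right h1 (hppnn q)
      _ = p q.1 * p q.2 := one_mul _
  have hsplit : ∀ q : K × K, ((μ (S q.1 ∩ S q.2)).toReal - u q.1 * u q.2) * (p q.1 * p q.2)
      = (μ (S q.1 ∩ S q.2)).toReal * (p q.1 * p q.2) - (u q.1 * p q.1) * (u q.2 * p q.2) := by
    intro q; ring
  calc ∫ ω, (∑' k, ((S k).indicator 1 ω - (μ (S k)).toReal) * p k) ^ 2 ∂μ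
      = ∫ ω, (∑' q : K × K, g ω q.1 * g ω q.2) ∂μ := by
        apply integral_congr_ae
        filter_upwards with ω
        rw [← step1]
    _ = ∑' q : K × K, ∫ ω, g ω q.1 * g ω q.2 ∂μ := step2
    _ = ∑' q : K × K, ((μ (S q.1 ∩ S q.2)).toReal * (p q.1 * p q.2)
          - (u q.1 * p q.1) * (u q.2 * p q.2)) := by
        refine tsum_congr fun q => ?_
        rw [step3 q, hsplit q]
    _ = (∑' q : K × K, (μ (S q.1 ∩ S q.2)).toReal * p q.1 * p q.2)
        - (∑' k, (μ (S k)).toReal * p k) ^ 2 := by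
        rw [Summable.tsum_sub hs1 hs2]
        congr 1
        · exact tsum_congr fun q => by rw [mul_assoc]
        · rw [sq, tsum_mul_tsum_of_summable_norm (f := fun k => u k * p k)
            (g := fun k => u k * p k) hFpn hFpn]

/-- Second-moment identity (Equation (A.1) in the proof of Theorem 2.2):
`E[Z²] = E[F((K∧L)/m)] − (E[F(K/m)])²`, where the expectations over the independent
Poisson vectors `K, L` (with `K_j, L_j ~ Poi(m_j x_j)`) are written out as sums against
the product-Poisson probability weights `P_{k,m}(x)`. -/
theorem szasz_centered_second_moment
    {d : ℕ} (hd : 0 < d) {Ω : Type*} [MeasurableSpace Ω]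
    (μ : Measure Ω) [IsProbabilityMeasure μ]
    (X : Ω → Fin d → ℝ) (hXmeas : Measurable X)
    (F : (Fin d → ℝ) → ℝ)
    (hF : ∀ t : Fin d → ℝ, F t = (μ {ω | ∀ j, X ω j ≤ t j}).toReal)
    (m : Fin d → ℕ) (hm : ∀ j, 0 < m j)
    (x : Fin d → ℝ) (hx : ∀ j, 0 ≤ x j) :
    (∫ ω, (∑' k : Fin d → ℕ,
        ((if ∀ j, X ω j ≤ (k j : ℝ) / (m j : ℝ) then (1:ℝ) else 0)
          - F (fun j => (k j : ℝ) / (m j : ℝ))) * poissonWeight m k x) ^ 2 ∂μ)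
      = (∑' p : (Fin d → ℕ) × (Fin d → ℕ),
          F (fun j => (min (p.1 j) (p.2 j) : ℝ) / (m j : ℝ))
            * poissonWeight m p.1 x * poissonWeight m p.2 x)
        - (∑' k : Fin d → ℕ,
            F (fun j => (k j : ℝ) / (m j : ℝ)) * poissonWeight m k x) ^ 2 := by
  classical
  set S : (Fin d → ℕ) → Set Ω := fun k => {ω | ∀ j, X ω j ≤ (k j : ℝ) / (m j : ℝ)} with hS_def
  have hSmeas : ∀ k, MeasurableSet (S k) := by
    intro k
    have h : S k = ⋂ j, {ω | X ω j ≤ (k j : ℝ) / (m j : ℝ)} := by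
      ext ω; simp [hS_def, Set.mem_iInter]
    rw [h]
    exact MeasurableSet.iInter fun j =>
      measurableSet_le ((measurable_pi_apply j).comp hXmeas) measurable_const
  have hFS : ∀ k : Fin d → ℕ, F (fun j => (k j : ℝ) / (m j : ℝ)) = (μ (S k)).toReal :=
    fun k => hF _
  have hmin : ∀ q : (Fin d → ℕ) × (Fin d → ℕ),
      F (fun j => (min (q.1 j) (q.2 j) : ℝ) / (m j : ℝ)) = (μ (S q.1 ∩ S q.2)).toReal := by
    intro q
    rw [hF]
    have hset : {ω | ∀ j, X ω j ≤ (min ((q.1 j : ℝ)) ((q.2 j : ℝ))) / (m j : ℝ)}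
        = S q.1 ∩ S q.2 := by
      ext ω
      simp only [hS_def, Set.mem_inter_iff, Set.mem_setOf_eq, ← forall_and]
      refine forall_congr' fun j => ?_
      have hmj : (0:ℝ) < (m j : ℝ) := by exact_mod_cast hm j
      rw [← min_div_div_right hmj.le, le_min_iff]
    rw [hset]
  have hind : ∀ (ω : Ω) (k : Fin d → ℕ),
      (if ∀ j, X ω j ≤ (k j : ℝ) / (m j : ℝ) then (1:ℝ) else 0) = (S k).indicator 1 ω := by
    intro ω k
    by_cases h : ∀ j, X ω j ≤ (k j : ℝ) / (m j : ℝ) <;>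
      simp [Set.indicator_apply, hS_def, h]
  have key := second_moment_abstract μ S hSmeas (fun k => poissonWeight m k x)
    (fun k => pw_nonneg m k x hx) (pw_hasSum m x hx)
  calc (∫ ω, (∑' k : Fin d → ℕ,
        ((if ∀ j, X ω j ≤ (k j : ℝ) / (m j : ℝ) then (1:ℝ) else 0)
          - F (fun j => (k j : ℝ) / (m j : ℝ))) * poissonWeight m k x) ^ 2 ∂μ)
      = ∫ ω, (∑' k, ((S k).indicator 1 ω - (μ (S k)).toReal) * poissonWeight m k x) ^ 2 ∂μ := by
        refine integral_congr_ae ?_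
        filter_upwards with ω
        congr 1
        refine tsum_congr fun k => ?_
        rw [hind ω k, hFS k]
    _ = (∑' q : (Fin d → ℕ) × (Fin d → ℕ),
          (μ (S q.1 ∩ S q.2)).toReal * poissonWeight m q.1 x * poissonWeight m q.2 x)
        - (∑' k, (μ (S k)).toReal * poissonWeight m k x) ^ 2 := key
    _ = (∑' p : (Fin d → ℕ) × (Fin d → ℕ),
          F (fun j => (min (p.1 j) (p.2 j) : ℝ) / (m j : ℝ))
            * poissonWeight m p.1 x * poissonWeight m p.2 x)
        - (∑' k : Fin d → ℕ,
            F (fun j => (k j : ℝ) / (m j : ℝ)) * poissonWeight m k x) ^ 2 := by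
        congr 1
        · exact tsum_congr fun q => by rw [hmin q]
        · congr 1
          exact tsum_congr fun k => by rw [hFS k]
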